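/- Lindenbaum-type extension lemma: for any consistent set Γ of formulas of the extended language L_𝐀 such that no agent name occurs free in Γ (𝐀∩FV(Γ)=∅), there exist an FV-maximal consistent set Δ with Γ⊆Δ and an assignment σ:FV(Δ)→𝐀 such that the pair (Δ,σ) is coherent. -/

import Mathlib

namespace SimplicialEpistemic

/-! ## Syntax -/

inductive Formula (Ag Xv Pr : Type) : Type
  | atom : Pr → Xv → Formula Ag Xv Pr
  | top : Formula Ag Xv Pr
  | neg : Formula Ag Xv Pr → Formula Ag Xv Pr
  | and : Formula Ag Xv Pr → Formula Ag Xv Pr → Formula Ag Xv Pr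
  | assign : Xv → Ag → Formula Ag Xv Pr → Formula Ag Xv Pr
  | know : Finset Xv → Formula Ag Xv Pr → Formula Ag Xv Pr

namespace Formula

variable {Ag Xv Pr : Type} [DecidableEq Xv]

/-- Free variables of a formula. -/
def FV : Formula Ag Xv Pr → Finset Xv
  | .atom _ x => {x}
  | .top => ∅
  | .neg φ => FV φ
  | .and φ ψ => FV φ ∪ FV ψ
  | .assign x _ φ => FV φ \ {x}
  | .know Xs _ => Xs

/-- Well-formedness: in `K_X α`, the formula `α` must have no free variables.
The language `L` consists of the well-formed formulas. -/
def Wf : Formula Ag Xv Pr → Prop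
  | .atom _ _ => True
  | .top => True
  | .neg φ => Wf φ
  | .and φ ψ => Wf φ ∧ Wf ψ
  | .assign _ _ φ => Wf φ
  | .know _ α => Wf α ∧ FV α = ∅

/-- A sentence is a well-formed formula with no free variables. -/
def Sent (φ : Formula Ag Xv Pr) : Prop := Wf φ ∧ FV φ = ∅

/-- Implication `φ → ψ`, defined as `¬(φ ∧ ¬ψ)`. -/
def impl (φ ψ : Formula Ag Xv Pr) : Formula Ag Xv Pr := .neg (.and φ (.neg ψ))

/-- Biconditional `φ ↔ ψ`. -/
def fiff (φ ψ : Formula Ag Xv Pr) : Formula Ag Xv Pr := .and (impl φ ψ) (impl ψ φ)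

/-- Disjunction `φ ∨ ψ`, defined as `¬(¬φ ∧ ¬ψ)`. -/
def fdisj (φ ψ : Formula Ag Xv Pr) : Formula Ag Xv Pr := .neg (.and (.neg φ) (.neg ψ))

/-- Falsum `⊥ := ¬⊤`. -/
def fbot : Formula Ag Xv Pr := .neg .top

/-- The dual assignment operator `⟨x:=a⟩φ := ¬[x:=a]¬φ`. -/
def dia (x : Xv) (a : Ag) (φ : Formula Ag Xv Pr) : Formula Ag Xv Pr :=
  .neg (.assign x a (.neg φ))

/-- Finite conjunction of a list of formulas. -/
def bigAnd : List (Formula Ag Xv Pr) → Formula Ag Xv Pr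
  | [] => .top
  | φ :: l => .and φ (bigAnd l)

/-- Iterated assignment `[x⃗:=a⃗]φ`. -/
def assigns : List Xv → List Ag → Formula Ag Xv Pr → Formula Ag Xv Pr
  | x :: xs, a :: as, φ => .assign x a (assigns xs as φ)
  | _, _, φ => φ

/-- Substitution `φ[y/x]` of `y` for all free occurrences of `x` in `φ`. -/
def subst (x y : Xv) : Formula Ag Xv Pr → Formula Ag Xv Pr
  | .atom p z => .atom p (if z = x then y else z)
  | .top => .top
  | .neg φ => .neg (subst x y φ)
  | .and φ ψ => .and (subst x y φ) (subst x y ψ)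
  | .assign z a φ => if z = x then .assign z a φ else .assign z a (subst x y φ)
  | .know Xs α => .know (Xs.image fun z => if z = x then y else z) α

/-- Admissibility of `φ[y/x]`: `x` has no free occurrence in `φ` within the scope
of `[y:=b]` for any `b`. -/
def Adm (x y : Xv) : Formula Ag Xv Pr → Prop
  | .atom _ _ => True
  | .top => True
  | .neg φ => Adm x y φ
  | .and φ ψ => Adm x y φ ∧ Adm x y ψ
  | .assign z _ φ => z = x ∨ x ∉ FV φ ∨ (z ≠ y ∧ Adm x y φ)
  | .know _ _ => True

/-- `occurs y φ`: the variable `y` occurs (free or bound) in `φ`. -/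
def occurs (y : Xv) : Formula Ag Xv Pr → Prop
  | .atom _ z => z = y
  | .top => False
  | .neg φ => occurs y φ
  | .and φ ψ => occurs y φ ∨ occurs y ψ
  | .assign z _ φ => z = y ∨ occurs y φ
  | .know Xs α => y ∈ Xs ∨ occurs y α

/-- Propositional evaluation, treating atoms, assignment formulas and knowledge
formulas as propositional atoms. -/
def propEval (v : Formula Ag Xv Pr → Bool) : Formula Ag Xv Pr → Bool
  | .atom p x => v (.atom p x)
  | .top => true
  | .neg φ => !(propEval v φ)
  | .and φ ψ => propEval v φ && propEval v ψ
  | .assign x a φ => v (.assign x a φ)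
  | .know Xs α => v (.know Xs α)

/-- `φ` is a propositional tautology. -/
def Tautology (φ : Formula Ag Xv Pr) : Prop := ∀ v, propEval v φ = true

end Formula

/-! ## Simplicial models and their semantics -/

structure SimpModel (Ag Pr : Type) : Type 1 where
  V : Type
  faces : Set (Set V)
  χ : V → Ag
  ℓ : Pr → Set V

namespace SimpModel

variable {Ag Pr : Type}

/-- The facets: faces contained in no other face. -/
def facets (C : SimpModel Ag Pr) : Set (Set C.V) :=
  {F | F ∈ C.faces ∧ ∀ G ∈ C.faces, F ⊆ G → F = G}

/-- The conditions for being a genuine simplicial model. -/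
def IsModel (C : SimpModel Ag Pr) : Prop :=
  Nonempty C.V ∧ (∅ : Set C.V) ∉ C.faces ∧
    (∀ Y F : Set C.V, Y.Nonempty → Y ⊆ F → F ∈ C.faces → Y ∈ C.faces) ∧
    (∀ v : C.V, {v} ∈ C.faces) ∧
    (∀ F ∈ C.faces, Set.InjOn C.χ F)

end SimpModel

/-! ## First-order Kripke models and their semantics -/

structure KModel (Ag Pr : Type) : Type 1 where
  W : Type
  δ : W → Set Ag
  R : Ag → W → W → Prop
  ρ : Pr → W → Set Ag

namespace KModel

variable {Ag Pr : Type}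

/-- The conditions for being a genuine first-order Kripke model. -/
def IsModel (M : KModel Ag Pr) : Prop :=
  Nonempty M.W ∧ (∀ w : M.W, (M.δ w).Nonempty) ∧
    (∀ (a : Ag) (w v : M.W), M.R a w v → a ∈ M.δ w) ∧
    (∀ (p : Pr) (w : M.W), M.ρ p w ⊆ M.δ w)

end KModel

variable {Ag Xv Pr : Type}

/-- Simplicial satisfaction `C, F, σ ⊩ φ`. -/
def SSat [DecidableEq Xv] (C : SimpModel Ag Pr) :
    Formula Ag Xv Pr → Set C.V → (Xv → Ag) → Prop
  | .atom p x, F, σ => σ x ∈ C.χ '' (F ∩ C.ℓ p)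
  | .top, _, _ => True
  | .neg φ, F, σ => ¬ SSat C φ F σ
  | .and φ ψ, F, σ => SSat C φ F σ ∧ SSat C ψ F σ
  | .assign x a φ, F, σ => a ∈ C.χ '' F → SSat C φ F (Function.update σ x a)
  | .know Xs α, F, σ =>
      ∀ G ∈ C.facets, (∀ x ∈ Xs, σ x ∈ C.χ '' (F ∩ G)) → SSat C α G σ

/-- Kripke satisfaction `M, w, σ ⊨ φ`. -/
def KSat [DecidableEq Xv] (M : KModel Ag Pr) :
    Formula Ag Xv Pr → M.W → (Xv → Ag) → Prop
  | .atom p x, w, σ => σ x ∈ M.ρ p w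
  | .top, _, _ => True
  | .neg φ, w, σ => ¬ KSat M φ w σ
  | .and φ ψ, w, σ => KSat M φ w σ ∧ KSat M ψ w σ
  | .assign x a φ, w, σ => a ∈ M.δ w → KSat M φ w (Function.update σ x a)
  | .know Xs α, w, σ => ∀ v : M.W, (∀ x ∈ Xs, M.R (σ x) w v) → KSat M α v σ

/-! ## Bisimulations -/

/-- Bisimulation between simplicial models. -/
def IsSBisim (C D : SimpModel Ag Pr) (Z : Set (Set C.V × Set D.V)) : Prop :=
  (∀ q ∈ Z, q.1 ∈ C.facets ∧ q.2 ∈ D.facets) ∧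
    ∀ F G, (F, G) ∈ Z →
      (C.χ '' F = D.χ '' G ∧ ∀ p : Pr, C.χ '' (F ∩ C.ℓ p) = D.χ '' (G ∩ D.ℓ p)) ∧
      (∀ (As : Set Ag) (F' : Set C.V), F' ∈ C.facets → As ⊆ C.χ '' (F ∩ F') →
        ∃ G' ∈ D.facets, As ⊆ D.χ '' (G ∩ G') ∧ (F', G') ∈ Z) ∧
      (∀ (As : Set Ag) (G' : Set D.V), G' ∈ D.facets → As ⊆ D.χ '' (G ∩ G') →
        ∃ F' ∈ C.facets, As ⊆ C.χ '' (F ∩ F') ∧ (F', G') ∈ Z)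

/-- Bisimulation between first-order Kripke models. -/
def IsKBisim (M N : KModel Ag Pr) (Z : Set (M.W × N.W)) : Prop :=
  ∀ w v, (w, v) ∈ Z →
    (M.δ w = N.δ v ∧ ∀ p : Pr, M.ρ p w = N.ρ p v) ∧
    (∀ (As : Set Ag) (w' : M.W), (∀ a ∈ As, M.R a w w') →
      ∃ v' : N.W, (∀ a ∈ As, N.R a v v') ∧ (w', v') ∈ Z) ∧
    (∀ (As : Set Ag) (v' : N.W), (∀ a ∈ As, N.R a v v') →
      ∃ w' : M.W, (∀ a ∈ As, M.R a w w') ∧ (w', v') ∈ Z)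

/-! ## Local epistemic models -/

/-- (Local S5): the restriction of `R_a` to `{w | a ∈ δ(w)}` is an equivalence relation. -/
def LocalS5 (M : KModel Ag Pr) : Prop :=
  ∀ a : Ag, Equivalence (fun w v : {w : M.W // a ∈ M.δ w} => M.R a w.1 v.1)

/-- (Individually Increasing Domain). -/
def IndInc (M : KModel Ag Pr) : Prop :=
  ∀ (a : Ag) (w v : M.W), a ∈ M.δ w → M.R a w v → a ∈ M.δ v

/-- (Local Predicates). -/
def LocalPred (M : KModel Ag Pr) : Prop :=
  ∀ (p : Pr) (a : Ag) (w v : M.W), a ∈ M.ρ p w → M.R a w v → a ∈ M.ρ p v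

/-- (Collectively Decreasing Domain). -/
def CollDec (M : KModel Ag Pr) : Prop :=
  ∀ w v : M.W, (∀ a ∈ M.δ w, M.R a w v) → M.δ v ⊆ M.δ w

/-- A local epistemic model. -/
def IsLEM (M : KModel Ag Pr) : Prop :=
  LocalS5 M ∧ IndInc M ∧ LocalPred M ∧ CollDec M

/-- (Properness): `⋂_{a ∈ δ(w)} R_a(w) = {w}` for every `w`. -/
def Proper (M : KModel Ag Pr) : Prop :=
  ∀ w : M.W, {v : M.W | ∀ a ∈ M.δ w, M.R a w v} = {w}

/-! ## Properization -/

/-- `[w]_δ = ⋂_{a ∈ δ(w)} R_a(w)`. -/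
def cell (M : KModel Ag Pr) (w : M.W) : Set M.W := {v | ∀ a ∈ M.δ w, M.R a w v}

/-- The properization `M^pr` of a Kripke model. -/
noncomputable def properize (M : KModel Ag Pr) : KModel Ag Pr where
  W := {S : Set M.W // ∃ w : M.W, S = cell M w}
  δ := fun S => M.δ S.2.choose
  R := fun a S T => ∃ w v : M.W, S.1 = cell M w ∧ T.1 = cell M v ∧ M.R a w v
  ρ := fun p S => M.ρ p S.2.choose

/-! ## The maps LEM and SC -/

/-- `LEM(C)`: the first-order Kripke model associated to a simplicial model. -/
def LEMof (C : SimpModel Ag Pr) : KModel Ag Pr where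
  W := {F : Set C.V // F ∈ C.facets}
  δ := fun F => C.χ '' F.1
  R := fun a F G => a ∈ C.χ '' (F.1 ∩ G.1)
  ρ := fun p F => C.χ '' (F.1 ∩ C.ℓ p)

/-- Vertices of `SC(M)`: pairs `(a, [w]_a)` with `a ∈ δ(w)`, `[w]_a = R_a(w)`. -/
abbrev SCVert (M : KModel Ag Pr) : Type :=
  {u : Ag × Set M.W // ∃ w : M.W, u.1 ∈ M.δ w ∧ u.2 = {v : M.W | M.R u.1 w v}}

/-- `F^M_w = {(a, [w]_a) | a ∈ δ(w)}`. -/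
def SCface (M : KModel Ag Pr) (w : M.W) : Set (SCVert M) :=
  {u | u.1.1 ∈ M.δ w ∧ u.1.2 = {v : M.W | M.R u.1.1 w v}}

/-- `SC(M)`: the simplicial model associated to a Kripke model. -/
def SCof (M : KModel Ag Pr) : SimpModel Ag Pr where
  V := SCVert M
  faces := {F : Set (SCVert M) | F.Nonempty ∧ ∃ w : M.W, F ⊆ SCface M w}
  χ := fun u => u.1.1
  ℓ := fun p => {u | ∃ w : M.W, u.1.1 ∈ M.ρ p w ∧ u.1.2 = {v : M.W | M.R u.1.1 w v}}

/-! ## Isomorphisms -/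

/-- Isomorphism of first-order Kripke models. -/
structure KIso (M N : KModel Ag Pr) where
  toEquiv : M.W ≃ N.W
  δ_eq : ∀ w : M.W, N.δ (toEquiv w) = M.δ w
  R_iff : ∀ (a : Ag) (w v : M.W), N.R a (toEquiv w) (toEquiv v) ↔ M.R a w v
  ρ_eq : ∀ (p : Pr) (w : M.W), N.ρ p (toEquiv w) = M.ρ p w

/-- Isomorphism of simplicial models. -/
structure SIso (C D : SimpModel Ag Pr) where
  toEquiv : C.V ≃ D.V
  face_iff : ∀ F : Set C.V, F ∈ C.faces ↔ (toEquiv '' F) ∈ D.faces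
  χ_eq : ∀ v : C.V, D.χ (toEquiv v) = C.χ v
  ℓ_iff : ∀ (p : Pr) (v : C.V), toEquiv v ∈ D.ℓ p ↔ v ∈ C.ℓ p

/-! ## The proof system LEL -/

/-- The axiom system `LEL` (over the well-formed fragment of the language). -/
inductive LEL [DecidableEq Xv] : Formula Ag Xv Pr → Prop
  | taut {φ} : Formula.Wf φ → Formula.Tautology φ → LEL φ
  | kk {Xs : Finset Xv} {α β} : Formula.Sent α → Formula.Sent β →
      LEL (Formula.impl (.know Xs (Formula.impl α β))
        (Formula.impl (.know Xs α) (.know Xs β)))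
  | mono {Xs Ys : Finset Xv} {α} : Xs ⊆ Ys → Formula.Sent α →
      LEL (Formula.impl (.know Xs α) (.know Ys α))
  | kasgn {x : Xv} {a : Ag} {φ ψ} : Formula.Wf φ → Formula.Wf ψ →
      LEL (Formula.impl (.assign x a (Formula.impl φ ψ))
        (Formula.impl (.assign x a φ) (.assign x a ψ)))
  | det {x : Xv} {a : Ag} {φ} : Formula.Wf φ →
      LEL (Formula.impl (Formula.dia x a φ) (.assign x a φ))
  | tr {x : Xv} {a : Ag} {φ} : Formula.Wf φ → x ∉ Formula.FV φ →
      LEL (Formula.impl φ (.assign x a φ))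
  | sub {x y : Xv} {a : Ag} {φ} : Formula.Wf φ → Formula.Adm x y φ →
      LEL (.assign y a (Formula.impl (.assign x a φ) (Formula.subst x y φ)))
  | com {x y : Xv} {a b : Ag} {φ} : Formula.Wf φ → x ≠ y →
      LEL (Formula.impl (.assign x a (.assign y b φ)) (.assign y b (.assign x a φ)))
  | ui {x : Xv} {φ} (l : List Ag) : Formula.Wf φ → l.Nodup → (∀ a : Ag, a ∈ l) →
      LEL (Formula.impl (Formula.bigAnd (l.map fun a => .assign x a φ)) φ)
  | tK {Xs : Finset Xv} {α} : Formula.Sent α → LEL (Formula.impl (.know Xs α) α)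
  | kni {xs : List Xv} {as : List Ag} {α} :
      Formula.Sent α → xs.Nodup → xs.length = as.length →
      LEL (Formula.assigns xs as (Formula.impl (.neg (.know xs.toFinset α))
        (.know xs.toFinset (Formula.assigns xs as (.neg (.know xs.toFinset α))))))
  | epi {x : Xv} {a : Ag} : LEL (.assign x a (.know {x} (Formula.dia x a .top)))
  | api {x : Xv} {a : Ag} {p : Pr} :
      LEL (.assign x a (Formula.impl (.atom p x) (.know {x} (.assign x a (.atom p x)))))
  | eni {xs : List Xv} {as : List Ag} {z : Xv} (l : List Ag) :
      xs.Nodup → xs.length = as.length → l.Nodup → (∀ b : Ag, b ∈ l ↔ b ∉ as) →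
      LEL (Formula.assigns xs as
        (Formula.impl (Formula.bigAnd (l.map fun b => .assign z b Formula.fbot))
          (.know xs.toFinset (Formula.bigAnd (l.map fun b => .assign z b Formula.fbot)))))
  | mp {φ ψ} : LEL (Formula.impl φ ψ) → LEL φ → LEL ψ
  | necK {α} : Formula.Sent α → LEL α → LEL (.know ∅ α)
  | necA {x : Xv} {a : Ag} {φ} : LEL φ → LEL (.assign x a φ)

/-- `Γ` is consistent in `LEL`: no finite subset has a provably false conjunction. -/
def Consistent [DecidableEq Xv] (Γ : Set (Formula Ag Xv Pr)) : Prop :=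
  ¬ ∃ l : List (Formula Ag Xv Pr), (∀ φ ∈ l, φ ∈ Γ) ∧ LEL (.neg (Formula.bigAnd l))

end SimplicialEpistemic

namespace SimplicialEpistemic

/-- The set of variables occurring free in some formula of `Δ`. -/
def FVset {Ag Xv Pr : Type} [DecidableEq Xv] (Δ : Set (Formula Ag Xv Pr)) : Set Xv :=
  ⋃ φ ∈ Δ, (Formula.FV φ : Set Xv)

/-- `Δ` is an FV-maximal consistent set. -/
def FVMCS {Ag Xv Pr : Type} [DecidableEq Xv] (Δ : Set (Formula Ag Xv Pr)) : Prop :=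
  (∀ φ ∈ Δ, Formula.Wf φ) ∧ Consistent Δ ∧
    ∀ φ : Formula Ag Xv Pr, Formula.Wf φ → (Formula.FV φ : Set Xv) ⊆ FVset Δ →
      φ ∈ Δ ∨ (.neg φ) ∈ Δ

/-- Coherence of `(Δ, σ)` in the extended language `L_𝐀`, whose variables are
`Xv ⊕ Ag` (the agents serve as names of themselves). -/
def Coherent {Ag Xv Pr : Type} [DecidableEq Xv] [DecidableEq Ag]
    (Δ : Set (Formula Ag (Xv ⊕ Ag) Pr)) (σ : (Xv ⊕ Ag) → Ag) : Prop :=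
  (∀ a : Ag, (Sum.inr a : Xv ⊕ Ag) ∈ FVset Δ → σ (Sum.inr a) = a) ∧
  (∀ z ∈ FVset Δ, ∀ l : List (Formula Ag (Xv ⊕ Ag) Pr), (∀ φ ∈ l, φ ∈ Δ) →
      ¬ LEL (.neg (Formula.dia z (σ z) (Formula.bigAnd l)))) ∧
  (∀ (z : Xv ⊕ Ag) (a : Ag),
      Formula.dia z a .top ∈ Δ → (Sum.inr a : Xv ⊕ Ag) ∈ FVset Δ)


section Toolkit
set_option linter.unusedSectionVars false
open Formula
variable {Ag Xv Pr : Type} [DecidableEq Xv]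

lemma wf_neg {φ : Formula Ag Xv Pr} (h : Wf φ) : Wf (Formula.neg φ) := h
lemma wf_and {φ ψ : Formula Ag Xv Pr} (h1 : Wf φ) (h2 : Wf ψ) : Wf (Formula.and φ ψ) := ⟨h1, h2⟩
lemma wf_impl {φ ψ : Formula Ag Xv Pr} (h1 : Wf φ) (h2 : Wf ψ) : Wf (Formula.impl φ ψ) := ⟨h1, h2⟩
lemma wf_top : Wf (Formula.top : Formula Ag Xv Pr) := trivial
lemma wf_fbot : Wf (Formula.fbot : Formula Ag Xv Pr) := trivial
lemma wf_dia {φ : Formula Ag Xv Pr} {x a} (h : Wf φ) : Wf (Formula.dia x a φ) := h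
lemma wf_fdisj {φ ψ : Formula Ag Xv Pr} (h1 : Wf φ) (h2 : Wf ψ) : Wf (Formula.fdisj φ ψ) := ⟨h1, h2⟩
lemma wf_assign {φ : Formula Ag Xv Pr} {x a} (h : Wf φ) : Wf (Formula.assign x a φ) := h

lemma wf_subst {x y : Xv} {φ : Formula Ag Xv Pr} (h : Wf φ) : Wf (Formula.subst x y φ) := by
  induction φ with
  | atom p z => trivial
  | top => trivial
  | neg φ ih => exact ih h
  | and φ ψ ih1 ih2 => exact ⟨ih1 h.1, ih2 h.2⟩
  | assign z a φ ih =>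
      simp only [Formula.subst]
      split
      · exact h
      · exact ih h
  | know Xs α ih => exact ⟨h.1, h.2⟩

lemma wf_bigAnd {l : List (Formula Ag Xv Pr)} (h : ∀ φ ∈ l, Wf φ) : Wf (Formula.bigAnd l) := by
  induction l with
  | nil => trivial
  | cons φ t ih =>
      exact ⟨h φ (by simp), ih (fun ψ hψ => h ψ (by simp [hψ]))⟩

lemma mem_fv_bigAnd {l : List (Formula Ag Xv Pr)} {z : Xv} :
    z ∈ Formula.FV (Formula.bigAnd l) ↔ ∃ φ ∈ l, z ∈ Formula.FV φ := by
  induction l with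
  | nil => simp [Formula.bigAnd, Formula.FV]
  | cons φ t ih => simp [Formula.bigAnd, Formula.FV, ih]

lemma wf_assigns {xs : List Xv} {as : List Ag} {φ : Formula Ag Xv Pr} (h : Wf φ) :
    Wf (Formula.assigns xs as φ) := by
  induction xs generalizing as with
  | nil => cases as <;> exact h
  | cons x xs ih => cases as with
    | nil => exact h
    | cons a as => exact ih (as := as)

lemma fv_assigns {xs : List Xv} {as : List Ag} {φ : Formula Ag Xv Pr}
    (hlen : xs.length = as.length) :
    Formula.FV (Formula.assigns xs as φ) = Formula.FV φ \ xs.toFinset := by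
  induction xs generalizing as with
  | nil => cases as with
    | nil => simp [Formula.assigns]
    | cons a as => simp at hlen
  | cons x xs ih => cases as with
    | nil => simp at hlen
    | cons a as =>
        simp only [Formula.assigns, Formula.FV, ih (by simpa using hlen)]
        ext z
        simp [List.toFinset_cons]
        tauto

lemma fv_impl {φ ψ : Formula Ag Xv Pr} :
    Formula.FV (Formula.impl φ ψ) = Formula.FV φ ∪ Formula.FV ψ := rfl

lemma wf_know {Xs : Finset Xv} {α : Formula Ag Xv Pr} (h1 : Wf α) (h2 : Formula.FV α = ∅) :
    Wf (Formula.know Xs α) := ⟨h1, h2⟩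

lemma lel_wf {φ : Formula Ag Xv Pr} (h : LEL φ) : Wf φ := by
  induction h with
  | taut hw _ => exact hw
  | @kk Xs α β hα hβ =>
      exact wf_impl (wf_know (wf_impl hα.1 hβ.1) (by rw [fv_impl, hα.2, hβ.2]; simp))
        (wf_impl (wf_know hα.1 hα.2) (wf_know hβ.1 hβ.2))
  | mono _ hα => exact wf_impl (wf_know hα.1 hα.2) (wf_know hα.1 hα.2)
  | kasgn h1 h2 =>
      exact wf_impl (wf_assign (wf_impl h1 h2)) (wf_impl (wf_assign h1) (wf_assign h2))
  | det h1 => exact wf_impl (wf_dia h1) (wf_assign h1)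
  | tr h1 _ => exact wf_impl h1 (wf_assign h1)
  | sub h1 _ => exact wf_assign (wf_impl (wf_assign h1) (wf_subst h1))
  | com h1 _ => exact wf_impl (wf_assign (wf_assign h1)) (wf_assign (wf_assign h1))
  | ui l h1 _ _ =>
      refine wf_impl (wf_bigAnd ?_) h1
      intro ψ hψ
      simp only [List.mem_map] at hψ
      obtain ⟨a, _, rfl⟩ := hψ
      exact wf_assign h1
  | tK hα => exact wf_impl (wf_know hα.1 hα.2) hα.1
  | @kni xs as α hα hnd hlen =>
      exact wf_assigns (wf_impl (wf_neg (wf_know hα.1 hα.2))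
        (wf_know (wf_assigns (wf_neg (wf_know hα.1 hα.2)))
          (by rw [fv_assigns hlen]; simp [Formula.FV])))
  | epi => exact wf_assign (wf_know (wf_dia wf_top) (by simp [Formula.FV, Formula.dia]))
  | api => exact wf_assign (wf_impl trivial
      (wf_know (wf_assign trivial) (by simp [Formula.FV])))
  | @eni xs as z l hnd hlen hlnd hmem =>
      have hwfb : Wf (Formula.bigAnd (l.map fun b =>
          Formula.assign z b (Formula.fbot : Formula Ag Xv Pr))) := by
        refine wf_bigAnd ?_
        intro ψ hψ
        simp only [List.mem_map] at hψ
        obtain ⟨a, _, rfl⟩ := hψ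
        trivial
      have hfvb : Formula.FV (Formula.bigAnd (l.map fun b =>
          Formula.assign z b (Formula.fbot : Formula Ag Xv Pr))) = ∅ := by
        ext w
        simp only [mem_fv_bigAnd, List.mem_map]
        simp [Formula.FV, Formula.fbot]
      exact wf_assigns (wf_impl hwfb (wf_know hwfb hfvb))
  | @mp φ ψ _ _ ih1 _ =>
      have h' : Wf φ ∧ Wf ψ := ih1
      exact h'.2
  | necK hα _ _ => exact wf_know hα.1 hα.2
  | necA _ ih => exact wf_assign ih

lemma t_imp_self {φ : Formula Ag Xv Pr} (h : Wf φ) : LEL (Formula.impl φ φ) := by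
  refine LEL.taut (wf_impl h h) ?_
  intro v; simp [Formula.propEval, Formula.impl]

/-! ### Propositional meta-lemmas -/

variable {A B C P Q R : Formula Ag Xv Pr}

lemma wf_split (h : Wf (Formula.impl A B)) : Wf A ∧ Wf B := h

lemma imp_trans (h1 : LEL (Formula.impl A B)) (h2 : LEL (Formula.impl B C)) :
    LEL (Formula.impl A C) := by
  have wA : Wf A ∧ Wf B := lel_wf h1
  have wC : Wf B ∧ Wf C := lel_wf h2
  have t : LEL (Formula.impl (Formula.impl A B)
      (Formula.impl (Formula.impl B C) (Formula.impl A C))) := by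
    refine LEL.taut (wf_impl (wf_impl wA.1 wA.2)
      (wf_impl (wf_impl wC.1 wC.2) (wf_impl wA.1 wC.2))) ?_
    intro v
    simp only [Formula.propEval, Formula.impl]
    cases Formula.propEval v A <;> cases Formula.propEval v B <;>
      cases Formula.propEval v C <;> simp
  exact LEL.mp (LEL.mp t h1) h2

lemma contrapose (h : LEL (Formula.impl A B)) :
    LEL (Formula.impl (Formula.neg B) (Formula.neg A)) := by
  have w : Wf A ∧ Wf B := lel_wf h
  have t : LEL (Formula.impl (Formula.impl A B)
      (Formula.impl (Formula.neg B) (Formula.neg A))) := by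
    refine LEL.taut (wf_impl (wf_impl w.1 w.2) (wf_impl w.2 w.1)) ?_
    intro v
    simp only [Formula.propEval, Formula.impl]
    cases Formula.propEval v A <;> cases Formula.propEval v B <;> simp
  exact LEL.mp t h

lemma mp_neg (h1 : LEL (Formula.impl A B)) (h2 : LEL (Formula.neg B)) :
    LEL (Formula.neg A) := LEL.mp (contrapose h1) h2

lemma nneg_intro (w : Wf A) : LEL (Formula.impl A (Formula.neg (Formula.neg A))) := by
  refine LEL.taut (wf_impl w w) ?_
  intro v
  simp only [Formula.propEval, Formula.impl]
  cases Formula.propEval v A <;> simp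

lemma nneg_elim (w : Wf A) : LEL (Formula.impl (Formula.neg (Formula.neg A)) A) := by
  refine LEL.taut (wf_impl w w) ?_
  intro v
  simp only [Formula.propEval, Formula.impl]
  cases Formula.propEval v A <;> simp

lemma thm_neg_neg (h : LEL A) : LEL (Formula.neg (Formula.neg A)) :=
  LEL.mp (nneg_intro (lel_wf h)) h

lemma imp_and (h1 : LEL (Formula.impl C A)) (h2 : LEL (Formula.impl C B)) :
    LEL (Formula.impl C (Formula.and A B)) := by
  have w1 : Wf C ∧ Wf A := lel_wf h1
  have w2 : Wf C ∧ Wf B := lel_wf h2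
  have t : LEL (Formula.impl (Formula.impl C A) (Formula.impl (Formula.impl C B)
      (Formula.impl C (Formula.and A B)))) := by
    refine LEL.taut (wf_impl (wf_impl w1.1 w1.2) (wf_impl (wf_impl w1.1 w2.2)
      (wf_impl w1.1 (wf_and w1.2 w2.2)))) ?_
    intro v
    simp only [Formula.propEval, Formula.impl]
    cases Formula.propEval v A <;> cases Formula.propEval v B <;>
      cases Formula.propEval v C <;> simp
  exact LEL.mp (LEL.mp t h1) h2

lemma and_left (wA : Wf A) (wB : Wf B) : LEL (Formula.impl (Formula.and A B) A) := by
  refine LEL.taut (wf_impl (wf_and wA wB) wA) ?_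
  intro v
  simp only [Formula.propEval, Formula.impl]
  cases Formula.propEval v A <;> cases Formula.propEval v B <;> simp

lemma and_right (wA : Wf A) (wB : Wf B) : LEL (Formula.impl (Formula.and A B) B) := by
  refine LEL.taut (wf_impl (wf_and wA wB) wB) ?_
  intro v
  simp only [Formula.propEval, Formula.impl]
  cases Formula.propEval v A <;> cases Formula.propEval v B <;> simp

lemma thm_imp (h : LEL B) (wA : Wf A) : LEL (Formula.impl A B) := by
  have wB := lel_wf h
  have t : LEL (Formula.impl B (Formula.impl A B)) := by
    refine LEL.taut (wf_impl wB (wf_impl wA wB)) ?_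
    intro v
    simp only [Formula.propEval, Formula.impl]
    cases Formula.propEval v A <;> cases Formula.propEval v B <;> simp
  exact LEL.mp t h

lemma t_scheme1 (wP : Wf P) (wQ : Wf Q) (wR : Wf R) :
    LEL (Formula.impl (Formula.impl P (Formula.impl Q R))
      (Formula.impl (Formula.neg R) (Formula.fdisj (Formula.neg P) (Formula.neg Q)))) := by
  refine LEL.taut (wf_impl (wf_impl wP (wf_impl wQ wR))
    (wf_impl wR (wf_fdisj wP wQ))) ?_
  intro v
  simp only [Formula.propEval, Formula.impl, Formula.fdisj]
  cases Formula.propEval v P <;> cases Formula.propEval v Q <;>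
    cases Formula.propEval v R <;> simp

lemma t_scheme2 (wP : Wf P) (wQ : Wf Q) (wR : Wf R) :
    LEL (Formula.impl (Formula.impl P (Formula.impl Q R))
      (Formula.impl (Formula.and (Formula.neg R) P) (Formula.neg Q))) := by
  refine LEL.taut (wf_impl (wf_impl wP (wf_impl wQ wR))
    (wf_impl (wf_and wR wP) wQ)) ?_
  intro v
  simp only [Formula.propEval, Formula.impl]
  cases Formula.propEval v P <;> cases Formula.propEval v Q <;>
    cases Formula.propEval v R <;> simp

lemma or_elim (h1 : LEL (Formula.impl A C)) (h2 : LEL (Formula.impl B C)) :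
    LEL (Formula.impl (Formula.fdisj A B) C) := by
  have w1 : Wf A ∧ Wf C := lel_wf h1
  have w2 : Wf B ∧ Wf C := lel_wf h2
  have t : LEL (Formula.impl (Formula.impl A C) (Formula.impl (Formula.impl B C)
      (Formula.impl (Formula.fdisj A B) C))) := by
    refine LEL.taut (wf_impl (wf_impl w1.1 w1.2) (wf_impl (wf_impl w2.1 w2.2)
      (wf_impl (wf_fdisj w1.1 w2.1) w1.2))) ?_
    intro v
    simp only [Formula.propEval, Formula.impl, Formula.fdisj]
    cases Formula.propEval v A <;> cases Formula.propEval v B <;>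
      cases Formula.propEval v C <;> simp
  exact LEL.mp (LEL.mp t h1) h2

lemma dichot (wA : Wf A) (wB : Wf B) :
    LEL (Formula.impl B (Formula.fdisj (Formula.and A B)
      (Formula.and (Formula.neg A) B))) := by
  refine LEL.taut (wf_impl wB (wf_fdisj (wf_and wA wB) (wf_and wA wB))) ?_
  intro v
  simp only [Formula.propEval, Formula.impl, Formula.fdisj]
  cases Formula.propEval v A <;> cases Formula.propEval v B <;> simp

lemma neg_of_imp_or (himp : LEL (Formula.impl C (Formula.fdisj A B)))
    (h1 : LEL (Formula.neg A)) (h2 : LEL (Formula.neg B)) : LEL (Formula.neg C) := by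
  have w : Wf C ∧ Wf (Formula.fdisj A B) := lel_wf himp
  have w2 : Wf A ∧ Wf B := w.2
  have t : LEL (Formula.impl (Formula.impl C (Formula.fdisj A B))
      (Formula.impl (Formula.neg A) (Formula.impl (Formula.neg B) (Formula.neg C)))) := by
    refine LEL.taut (wf_impl (wf_impl w.1 (wf_fdisj w2.1 w2.2))
      (wf_impl w2.1 (wf_impl w2.2 w.1))) ?_
    intro v
    simp only [Formula.propEval, Formula.impl, Formula.fdisj]
    cases Formula.propEval v A <;> cases Formula.propEval v B <;>
      cases Formula.propEval v C <;> simp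
  exact LEL.mp (LEL.mp (LEL.mp t himp) h1) h2

/-! ### Modal meta-lemmas -/

lemma box_mono {x : Xv} {a : Ag} (h : LEL (Formula.impl A B)) :
    LEL (Formula.impl (Formula.assign x a A) (Formula.assign x a B)) := by
  have w : Wf A ∧ Wf B := lel_wf h
  exact LEL.mp (LEL.kasgn w.1 w.2) (LEL.necA h)

lemma dia_mono {x : Xv} {a : Ag} (h : LEL (Formula.impl A B)) :
    LEL (Formula.impl (Formula.dia x a A) (Formula.dia x a B)) :=
  contrapose (box_mono (contrapose h))

lemma neg_dia_of_neg {x : Xv} {a : Ag} (h : LEL (Formula.neg A)) :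
    LEL (Formula.neg (Formula.dia x a A)) :=
  thm_neg_neg (LEL.necA h)

lemma box_imp_distr {x : Xv} {a : Ag} (h : LEL (Formula.impl A (Formula.impl B C))) :
    LEL (Formula.impl (Formula.assign x a A)
      (Formula.impl (Formula.assign x a B) (Formula.assign x a C))) := by
  have w : Wf A ∧ Wf (Formula.impl B C) := lel_wf h
  have w2 : Wf B ∧ Wf C := w.2
  exact imp_trans (box_mono h) (LEL.kasgn w2.1 w2.2)

lemma dia_or {x : Xv} {a : Ag} (wA : Wf A) (wB : Wf B) :
    LEL (Formula.impl (Formula.dia x a (Formula.fdisj A B))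
      (Formula.fdisj (Formula.dia x a A) (Formula.dia x a B))) := by
  have base : LEL (Formula.impl (Formula.neg A)
      (Formula.impl (Formula.neg B) (Formula.neg (Formula.fdisj A B)))) := by
    refine LEL.taut (wf_impl wA (wf_impl wB (wf_fdisj wA wB))) ?_
    intro v
    simp only [Formula.propEval, Formula.impl, Formula.fdisj]
    cases Formula.propEval v A <;> cases Formula.propEval v B <;> simp
  have d := box_imp_distr (x := x) (a := a) base
  have wd : Wf (Formula.assign x a (Formula.neg A)) ∧
      Wf (Formula.impl (Formula.assign x a (Formula.neg B))
        (Formula.assign x a (Formula.neg (Formula.fdisj A B)))) := lel_wf d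
  exact LEL.mp (t_scheme1 (P := Formula.assign x a (Formula.neg A))
    (Q := Formula.assign x a (Formula.neg B))
    (R := Formula.assign x a (Formula.neg (Formula.fdisj A B)))
    (wf_assign wA) (wf_assign wB) (wf_assign (wf_fdisj wA wB))) d

lemma dia_top_box {x : Xv} {a : Ag} (wB : Wf B) :
    LEL (Formula.impl (Formula.and (Formula.dia x a Formula.top) (Formula.assign x a B))
      (Formula.dia x a B)) := by
  have base : LEL (Formula.impl B
      (Formula.impl (Formula.neg B) (Formula.neg Formula.top))) := by
    refine LEL.taut (wf_impl wB (wf_impl wB (wf_neg (wf_top (Ag := Ag) (Xv := Xv) (Pr := Pr))))) ?_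
    intro v
    simp only [Formula.propEval, Formula.impl]
    cases Formula.propEval v B <;> simp
  have d := box_imp_distr (x := x) (a := a) base
  have t := t_scheme2 (P := Formula.assign x a B)
    (Q := Formula.assign x a (Formula.neg B))
    (R := Formula.assign x a (Formula.neg (Formula.top : Formula Ag Xv Pr)))
    (wf_assign wB) (wf_assign wB) (wf_assign (wf_neg (wf_top (Ag := Ag) (Xv := Xv) (Pr := Pr))))
  exact LEL.mp t d

lemma comm_dia {x y : Xv} {a b : Ag} (hxy : x ≠ y) (wC : Wf C) :
    LEL (Formula.impl (Formula.dia x a (Formula.dia y b C))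
      (Formula.dia y b (Formula.dia x a C))) := by
  have s1 : LEL (Formula.impl
      (Formula.assign y b (Formula.neg (Formula.neg (Formula.assign x a (Formula.neg C)))))
      (Formula.assign y b (Formula.assign x a (Formula.neg C)))) :=
    box_mono (nneg_elim (wf_assign wC))
  have s2 : LEL (Formula.impl
      (Formula.assign y b (Formula.assign x a (Formula.neg C)))
      (Formula.assign x a (Formula.assign y b (Formula.neg C)))) :=
    LEL.com wC (Ne.symm hxy)
  have s3 : LEL (Formula.impl
      (Formula.assign x a (Formula.assign y b (Formula.neg C)))
      (Formula.assign x a (Formula.neg (Formula.neg (Formula.assign y b (Formula.neg C)))))) :=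
    box_mono (nneg_intro (wf_assign wC))
  exact contrapose (imp_trans s1 (imp_trans s2 s3))

/-! ### Diamond prefixes -/

def diaPre : List (Xv × Ag) → Formula Ag Xv Pr → Formula Ag Xv Pr
  | [], φ => φ
  | (z, a) :: P, φ => Formula.dia z a (diaPre P φ)

@[simp] lemma diaPre_nil {A : Formula Ag Xv Pr} : diaPre [] A = A := rfl

@[simp] lemma diaPre_cons {z : Xv} {a : Ag} {P : List (Xv × Ag)} {A : Formula Ag Xv Pr} :
    diaPre ((z, a) :: P) A = Formula.dia z a (diaPre P A) := rfl

lemma diaPre_append {P Q : List (Xv × Ag)} {A : Formula Ag Xv Pr} :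
    diaPre (P ++ Q) A = diaPre P (diaPre Q A) := by
  induction P with
  | nil => rfl
  | cons p P ih => obtain ⟨z, a⟩ := p; simp [ih]

lemma wf_diaPre {P : List (Xv × Ag)} (h : Wf A) : Wf (diaPre P A) := by
  induction P with
  | nil => exact h
  | cons p P ih => obtain ⟨z, a⟩ := p; exact wf_dia ih

lemma pre_mono {P : List (Xv × Ag)} (h : LEL (Formula.impl A B)) :
    LEL (Formula.impl (diaPre P A) (diaPre P B)) := by
  induction P with
  | nil => exact h
  | cons p P ih => obtain ⟨z, a⟩ := p; exact dia_mono ih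

lemma pre_neg {P : List (Xv × Ag)} (h : LEL (Formula.neg A)) :
    LEL (Formula.neg (diaPre P A)) := by
  induction P with
  | nil => exact h
  | cons p P ih => obtain ⟨z, a⟩ := p; exact neg_dia_of_neg ih

lemma pre_or {P : List (Xv × Ag)} (wA : Wf A) (wB : Wf B) :
    LEL (Formula.impl (diaPre P (Formula.fdisj A B))
      (Formula.fdisj (diaPre P A) (diaPre P B))) := by
  induction P with
  | nil => exact t_imp_self (wf_fdisj wA wB)
  | cons p P ih =>
      obtain ⟨z, a⟩ := p
      exact imp_trans (dia_mono ih) (dia_or (wf_diaPre wA) (wf_diaPre wB))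

lemma pre_perm {P Q : List (Xv × Ag)} (hp : P.Perm Q)
    (hnd : (P.map Prod.fst).Nodup) (wA : Wf A) :
    LEL (Formula.impl (diaPre P A) (diaPre Q A)) := by
  induction hp with
  | nil => exact t_imp_self wA
  | @cons p l1 l2 h ih =>
      obtain ⟨z, a⟩ := p
      simp only [List.map_cons, List.nodup_cons] at hnd
      exact dia_mono (ih hnd.2)
  | @swap p q l =>
      obtain ⟨z1, a1⟩ := p
      obtain ⟨z2, a2⟩ := q
      simp only [List.map_cons, List.nodup_cons, List.mem_cons] at hnd
      exact comm_dia (fun h => hnd.1 (Or.inl h)) (wf_diaPre wA)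
  | @trans l1 l2 l3 h1 h2 ih1 ih2 =>
      refine imp_trans (ih1 hnd) (ih2 ?_)
      exact ((h1.map Prod.fst).nodup_iff).mp hnd

/-! ### bigAnd lemmas -/

lemma bigAnd_elim {l : List (Formula Ag Xv Pr)} (hwf : ∀ φ ∈ l, Wf φ) (hm : A ∈ l) :
    LEL (Formula.impl (Formula.bigAnd l) A) := by
  induction l with
  | nil => simp at hm
  | cons ψ t ih =>
      have hψ : Wf ψ := hwf ψ (by simp)
      have ht : ∀ φ ∈ t, Wf φ := fun φ hφ => hwf φ (by simp [hφ])
      rcases List.mem_cons.mp hm with h | h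
      · subst h; exact and_left hψ (wf_bigAnd ht)
      · exact imp_trans (and_right hψ (wf_bigAnd ht)) (ih ht h)

lemma thm_top : LEL (Formula.top : Formula Ag Xv Pr) := LEL.taut trivial (fun _ => rfl)

lemma bigAnd_imp {l m : List (Formula Ag Xv Pr)} (hwfl : ∀ φ ∈ l, Wf φ)
    (hwfm : ∀ φ ∈ m, Wf φ) (h : ∀ φ ∈ m, φ ∈ l ∨ LEL φ) :
    LEL (Formula.impl (Formula.bigAnd l) (Formula.bigAnd m)) := by
  induction m with
  | nil => exact thm_imp thm_top (wf_bigAnd hwfl)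
  | cons ψ t ih =>
      have ht : ∀ φ ∈ t, Wf φ := fun φ hφ => hwfm φ (by simp [hφ])
      refine imp_and ?_ (ih ht (fun φ hφ => h φ (by simp [hφ])))
      rcases h ψ (by simp) with hh | hh
      · exact bigAnd_elim hwfl hh
      · exact thm_imp hh (wf_bigAnd hwfl)

/-! ### Consistency with prefixes -/

def FunRel (τ : Set (Xv × Ag)) : Prop := ∀ p ∈ τ, ∀ q ∈ τ, p.1 = q.1 → p.2 = q.2

def ConsAll (Δ : Set (Formula Ag Xv Pr)) (τ : Set (Xv × Ag)) : Prop :=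
  ∀ l : List (Formula Ag Xv Pr), (∀ φ ∈ l, φ ∈ Δ) →
  ∀ P : List (Xv × Ag), (∀ p ∈ P, p ∈ τ) → (P.map Prod.fst).Nodup →
  ¬ LEL (Formula.neg (diaPre P (Formula.bigAnd l)))

lemma refute_lift {P E Q : List (Xv × Ag)} {χ χ' : Formula Ag Xv Pr}
    (h : LEL (Formula.neg (diaPre P χ')))
    (himp : LEL (Formula.impl χ χ'))
    (hperm : Q.Perm (E ++ P)) (hnd : (Q.map Prod.fst).Nodup) :
    LEL (Formula.neg (diaPre Q χ)) := by
  have w : Wf χ ∧ Wf χ' := lel_wf himp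
  have h1 : LEL (Formula.neg (diaPre P χ)) := mp_neg (pre_mono himp) h
  have h2 : LEL (Formula.neg (diaPre (E ++ P) χ)) := by
    rw [diaPre_append]; exact pre_neg h1
  exact mp_neg (pre_perm hperm hnd w.1) h2

lemma exists_perm_append [DecidableEq Ag] {τ : Set (Xv × Ag)} (hfun : FunRel τ)
    {P Q : List (Xv × Ag)} (hP : ∀ p ∈ P, p ∈ τ) (hQ : ∀ p ∈ Q, p ∈ τ)
    (hnd : (P.map Prod.fst).Nodup)
    (hsub : ∀ p ∈ P, ∃ q ∈ Q, q.1 = p.1) :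
    ∃ E, Q.Perm (E ++ P) := by
  letI : BEq (Xv × Ag) := instBEqOfDecidableEq
  haveI : LawfulBEq (Xv × Ag) :=
    { eq_of_beq := fun h => of_decide_eq_true h
      rfl := fun {a} => of_decide_eq_self_eq_true _ }
  induction P generalizing Q with
  | nil => exact ⟨Q, by simp⟩
  | cons p P ih =>
      obtain ⟨q, hqQ, hq1⟩ := hsub p (by simp)
      have hqp : q = p := by
        have h2 := hfun q (hQ q hqQ) p (hP p (by simp)) hq1
        exact Prod.ext hq1 h2
      rw [hqp] at hqQ
      simp only [List.map_cons, List.nodup_cons] at hnd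
      have hsub' : ∀ r ∈ P, ∃ q ∈ Q.erase p, q.1 = r.1 := by
        intro r hr
        obtain ⟨q', hq'Q, hq'1⟩ := hsub r (by simp [hr])
        have hne : q' ≠ p := by
          intro hh
          apply hnd.1
          rw [hh] at hq'1
          rw [hq'1]
          exact List.mem_map_of_mem (f := Prod.fst) hr
        exact ⟨q', (List.mem_erase_of_ne hne).mpr hq'Q, hq'1⟩
      obtain ⟨E, hE⟩ := ih (fun r hr => hP r (by simp [hr]))
        (Q := Q.erase p) (fun r hr => hQ r (List.mem_of_mem_erase hr)) hnd.2 hsub'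
      refine ⟨E, ?_⟩
      exact ((List.perm_cons_erase hqQ).trans (hE.cons p)).trans List.perm_middle.symm

lemma merge2 [DecidableEq Ag] {τ : Set (Xv × Ag)} (hfun : FunRel τ)
    {P1 P2 : List (Xv × Ag)} (h1 : ∀ p ∈ P1, p ∈ τ) (h2 : ∀ p ∈ P2, p ∈ τ)
    (n1 : (P1.map Prod.fst).Nodup) (n2 : (P2.map Prod.fst).Nodup) :
    ∃ Pm : List (Xv × Ag), (∀ p ∈ Pm, p ∈ τ) ∧ (Pm.map Prod.fst).Nodup ∧
      (∀ p ∈ P1, ∃ q ∈ Pm, q.1 = p.1) ∧ (∀ p ∈ P2, ∃ q ∈ Pm, q.1 = p.1) := by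
  classical
  refine ⟨P1 ++ P2.filter (fun q => decide (q.1 ∉ P1.map Prod.fst)), ?_, ?_, ?_, ?_⟩
  · intro p hp
    rcases List.mem_append.mp hp with h | h
    · exact h1 p h
    · exact h2 p (List.mem_of_mem_filter h)
  · rw [List.map_append]
    refine List.Nodup.append n1 ?_ ?_
    · exact List.Nodup.sublist (List.Sublist.map Prod.fst (List.filter_sublist (l := P2))) n2
    · intro x hx hx2
      obtain ⟨q, hq, rfl⟩ := List.mem_map.mp hx2
      have := List.of_mem_filter hq
      simp only [decide_eq_true_eq] at this
      exact this hx
  · intro p hp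
    exact ⟨p, List.mem_append.mpr (Or.inl hp), rfl⟩
  · intro p hp
    by_cases hc : p.1 ∈ P1.map Prod.fst
    · obtain ⟨q, hq, hq1⟩ := List.mem_map.mp hc
      exact ⟨q, List.mem_append.mpr (Or.inl hq), hq1⟩
    · refine ⟨p, List.mem_append.mpr (Or.inr ?_), rfl⟩
      exact List.mem_filter.mpr ⟨hp, by simpa using hc⟩

lemma mergeAll [DecidableEq Ag] {τ : Set (Xv × Ag)} (hfun : FunRel τ)
    (Ps : List (List (Xv × Ag)))
    (h : ∀ P ∈ Ps, (∀ p ∈ P, p ∈ τ) ∧ (P.map Prod.fst).Nodup) :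
    ∃ Pm : List (Xv × Ag), (∀ p ∈ Pm, p ∈ τ) ∧ (Pm.map Prod.fst).Nodup ∧
      ∀ P ∈ Ps, ∀ p ∈ P, ∃ q ∈ Pm, q.1 = p.1 := by
  induction Ps with
  | nil => exact ⟨[], by simp, by simp, by simp⟩
  | cons P Ps ih =>
      obtain ⟨Pm', hPm', hnd', hsub'⟩ := ih (fun Q hQ => h Q (by simp [hQ]))
      have hP := h P (by simp)
      obtain ⟨Pm, hPm, hnd, hs1, hs2⟩ := merge2 hfun hP.1 hPm' hP.2 hnd'
      refine ⟨Pm, hPm, hnd, ?_⟩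
      intro Q hQ p hp
      rcases List.mem_cons.mp hQ with rfl | hQ
      · exact hs1 p hp
      · obtain ⟨q', hq', hq'1⟩ := hsub' Q hQ p hp
        obtain ⟨q, hq, hq1⟩ := hs2 q' hq'
        exact ⟨q, hq, hq1.trans hq'1⟩

lemma orelim {P : List (Xv × Ag)} {ms : List (Formula Ag Xv Pr)} (hwf : ∀ ψ ∈ ms, Wf ψ)
    (h : ∀ ψ ∈ ms, LEL (Formula.neg (diaPre P (Formula.neg ψ)))) :
    LEL (Formula.neg (diaPre P (Formula.neg (Formula.bigAnd ms)))) := by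
  induction ms with
  | nil => exact pre_neg (thm_neg_neg thm_top)
  | cons ψ t ih =>
      have hψ : Wf ψ := hwf ψ (by simp)
      have ht : ∀ φ ∈ t, Wf φ := fun φ hφ => hwf φ (by simp [hφ])
      have wT : Wf (Formula.bigAnd t) := wf_bigAnd ht
      have hsplit : LEL (Formula.impl (Formula.neg (Formula.bigAnd (ψ :: t)))
          (Formula.fdisj (Formula.neg ψ) (Formula.neg (Formula.bigAnd t)))) := by
        refine LEL.taut (wf_impl (wf_and hψ wT) (wf_fdisj hψ wT)) ?_
        intro v
        simp only [Formula.propEval, Formula.impl, Formula.fdisj, Formula.bigAnd]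
        cases Formula.propEval v ψ <;> cases Formula.propEval v (Formula.bigAnd t) <;> simp
      have himp := imp_trans (pre_mono (P := P) hsplit)
        (pre_or (P := P) (wf_neg hψ) (wf_neg wT))
      exact neg_of_imp_or himp (h ψ (by simp)) (ih ht (fun φ hφ => h φ (by simp [hφ])))

lemma consAll_insert_thm {Δ : Set (Formula Ag Xv Pr)} {τ : Set (Xv × Ag)}
    {θ : Formula Ag Xv Pr} (hθ : LEL θ) (hwf : ∀ φ ∈ Δ, Wf φ) (h : ConsAll Δ τ) :
    ConsAll (insert θ Δ) τ := by
  classical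
  intro l hl P hP hnd hneg
  set l' := l.filter (fun φ => decide (φ ∈ Δ)) with hl'def
  have hl' : ∀ φ ∈ l', φ ∈ Δ := by
    intro φ hφ
    have := List.of_mem_filter hφ
    simpa using this
  have himp : LEL (Formula.impl (Formula.bigAnd l') (Formula.bigAnd l)) := by
    refine bigAnd_imp (fun φ hφ => hwf φ (hl' φ hφ)) ?_ ?_
    · intro φ hφ
      rcases hl φ hφ with h1 | h1
      · exact h1 ▸ lel_wf hθ
      · exact hwf φ h1
    · intro φ hφ
      by_cases hc : φ ∈ Δ
      · exact Or.inl (List.mem_filter.mpr ⟨hφ, by simpa using hc⟩)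
      · rcases hl φ hφ with h1 | h1
        · exact Or.inr (h1 ▸ hθ)
        · exact absurd h1 hc
  exact h l' hl' P hP hnd (mp_neg (pre_mono himp) hneg)

lemma consAll_dichot {Δ : Set (Formula Ag Xv Pr)} {τ : Set (Xv × Ag)} [DecidableEq Ag]
    {φ : Formula Ag Xv Pr} (hwf : ∀ ψ ∈ Δ, Wf ψ) (wφ : Wf φ) (hfun : FunRel τ)
    (h : ConsAll Δ τ) :
    ConsAll (insert φ Δ) τ ∨ ConsAll (insert (Formula.neg φ) Δ) τ := by
  classical
  by_contra hc
  push_neg at hc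
  obtain ⟨h1, h2⟩ := hc
  simp only [ConsAll, not_forall, not_not] at h1 h2
  obtain ⟨l1, hl1, P1, hP1, hnd1, hr1⟩ := h1
  obtain ⟨l2, hl2, P2, hP2, hnd2, hr2⟩ := h2
  set l1' := l1.filter (fun ψ => decide (ψ ∈ Δ)) with hl1'def
  set l2' := l2.filter (fun ψ => decide (ψ ∈ Δ)) with hl2'def
  have hmem1 : ∀ ψ ∈ l1', ψ ∈ Δ := fun ψ hψ => by simpa using List.of_mem_filter hψ
  have hmem2 : ∀ ψ ∈ l2', ψ ∈ Δ := fun ψ hψ => by simpa using List.of_mem_filter hψ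
  set L := l1' ++ l2' with hLdef
  have hLmem : ∀ ψ ∈ L, ψ ∈ Δ := by
    intro ψ hψ
    rcases List.mem_append.mp hψ with hh | hh
    · exact hmem1 ψ hh
    · exact hmem2 ψ hh
  have hLwf : ∀ ψ ∈ L, Wf ψ := fun ψ hψ => hwf ψ (hLmem ψ hψ)
  obtain ⟨Pm, hPm, hndm, hc1, hc2⟩ := merge2 hfun hP1 hP2 hnd1 hnd2
  have himp1 : LEL (Formula.impl (Formula.bigAnd (φ :: L)) (Formula.bigAnd l1)) := by
    refine bigAnd_imp (by
        intro ψ hψ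
        rcases List.mem_cons.mp hψ with rfl | hh
        · exact wφ
        · exact hLwf ψ hh) (by
        intro ψ hψ
        rcases hl1 ψ hψ with h1 | h1
        · exact h1 ▸ wφ
        · exact hwf ψ h1) ?_
    intro ψ hψ
    rcases hl1 ψ hψ with hh | hh
    · exact Or.inl (hh ▸ List.mem_cons_self (a := φ) (l := L))
    · refine Or.inl (List.mem_cons_of_mem φ ?_)
      exact List.mem_append.mpr (Or.inl (List.mem_filter.mpr ⟨hψ, by simpa using hh⟩))
  have himp2 : LEL (Formula.impl (Formula.bigAnd (Formula.neg φ :: L)) (Formula.bigAnd l2)) := by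
    refine bigAnd_imp (by
        intro ψ hψ
        rcases List.mem_cons.mp hψ with rfl | hh
        · exact wφ
        · exact hLwf ψ hh) (by
        intro ψ hψ
        rcases hl2 ψ hψ with h1 | h1
        · exact h1 ▸ (wφ : Wf (Formula.neg φ))
        · exact hwf ψ h1) ?_
    intro ψ hψ
    rcases hl2 ψ hψ with hh | hh
    · exact Or.inl (hh ▸ List.mem_cons_self (a := Formula.neg φ) (l := L))
    · refine Or.inl (List.mem_cons_of_mem _ ?_)
      exact List.mem_append.mpr (Or.inr (List.mem_filter.mpr ⟨hψ, by simpa using hh⟩))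
  obtain ⟨E1, hE1⟩ := exists_perm_append hfun hP1 hPm hnd1 hc1
  obtain ⟨E2, hE2⟩ := exists_perm_append hfun hP2 hPm hnd2 hc2
  have R1 : LEL (Formula.neg (diaPre Pm (Formula.bigAnd (φ :: L)))) :=
    refute_lift hr1 himp1 hE1 hndm
  have R2 : LEL (Formula.neg (diaPre Pm (Formula.bigAnd (Formula.neg φ :: L)))) :=
    refute_lift hr2 himp2 hE2 hndm
  have hd : LEL (Formula.impl (Formula.bigAnd L)
      (Formula.fdisj (Formula.bigAnd (φ :: L)) (Formula.bigAnd (Formula.neg φ :: L)))) :=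
    dichot wφ (wf_bigAnd hLwf)
  have himpd := imp_trans (pre_mono (P := Pm) hd)
    (pre_or (P := Pm) (wf_and wφ (wf_bigAnd hLwf)) (wf_and wφ (wf_bigAnd hLwf)))
  exact h L hLmem Pm hPm hndm (neg_of_imp_or himpd R1 R2)

lemma reorg [DecidableEq Ag] {τ : Set (Xv × Ag)} {z : Xv} {c : Ag}
    {χ : Formula Ag Xv Pr} {P : List (Xv × Ag)}
    (hz : ∀ d, (z, d) ∉ τ) (hP : ∀ p ∈ P, p ∈ insert (z, c) τ)
    (hnd : (P.map Prod.fst).Nodup) (hmem : (z, c) ∈ P) (wχ : Wf χ)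
    (hr : LEL (Formula.neg (diaPre P χ))) :
    ∃ A : List (Xv × Ag), (∀ p ∈ A, p ∈ τ) ∧ (A.map Prod.fst).Nodup ∧
      LEL (Formula.neg (diaPre A (Formula.dia z c χ))) := by
  letI : BEq (Xv × Ag) := instBEqOfDecidableEq
  haveI : LawfulBEq (Xv × Ag) :=
    { eq_of_beq := fun h => of_decide_eq_true h
      rfl := fun {a} => of_decide_eq_self_eq_true _ }
  set A := P.erase (z, c) with hA
  have hsubl : List.Sublist A P := List.erase_sublist
  have hndA : (A.map Prod.fst).Nodup := List.Nodup.sublist (List.Sublist.map _ hsubl) hnd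
  have hAmem : ∀ p ∈ A, p ∈ τ := by
    intro p hp
    rcases hP p (hsubl.mem hp) with h1 | h1
    · -- p = (z,c): impossible, two occurrences of z in fsts
      exfalso
      have hpP : p ∈ P := hsubl.mem hp
      have hPnd : P.Nodup := List.Nodup.of_map Prod.fst hnd
      have := (hPnd.mem_erase_iff).mp hp
      exact this.1 h1
    · exact h1
  have hperm : (A ++ [(z, c)]).Perm P :=
    (List.perm_append_singleton _ _).trans (List.perm_cons_erase hmem).symm
  have hndA2 : ((A ++ [(z, c)]).map Prod.fst).Nodup :=
    ((hperm.map Prod.fst).nodup_iff).mpr hnd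
  have hres : LEL (Formula.neg (diaPre (A ++ [(z, c)]) χ)) :=
    mp_neg (pre_perm hperm hndA2 wχ) hr
  rw [diaPre_append] at hres
  exact ⟨A, hAmem, hndA, hres⟩

lemma choose_val [Fintype Ag] [Nonempty Ag] [DecidableEq Ag]
    {Δ : Set (Formula Ag Xv Pr)} {τ : Set (Xv × Ag)} {z : Xv}
    (hwf : ∀ φ ∈ Δ, Wf φ) (hfun : FunRel τ) (h : ConsAll Δ τ)
    (hz : ∀ b, (z, b) ∉ τ) :
    ∃ a : Ag, ConsAll Δ (insert (z, a) τ) := by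
  classical
  by_contra hc
  push_neg at hc
  have key : ∀ a : Ag, ∃ lA : List (Formula Ag Xv Pr) × List (Xv × Ag),
      (∀ φ ∈ lA.1, φ ∈ Δ) ∧ (∀ p ∈ lA.2, p ∈ τ) ∧ (lA.2.map Prod.fst).Nodup ∧
      LEL (Formula.neg (diaPre lA.2 (Formula.dia z a (Formula.bigAnd lA.1)))) := by
    intro a
    have hca := hc a
    simp only [ConsAll, not_forall, not_not] at hca
    obtain ⟨l, hl, P, hP, hnd, hr⟩ := hca
    by_cases hmem : (z, a) ∈ P
    · obtain ⟨A, hA1, hA2, hA3⟩ := reorg hz hP hnd hmem (wf_bigAnd (fun ψ hψ => hwf ψ (hl ψ hψ))) hr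
      exact ⟨(l, A), hl, hA1, hA2, hA3⟩
    · exfalso
      refine h l hl P ?_ hnd hr
      intro p hp
      rcases hP p hp with h1 | h1
      · exact absurd (h1 ▸ hp) hmem
      · exact h1
  choose f hf1 hf2 hf3 hf4 using key
  set agl := (Finset.univ : Finset Ag).toList with hagl
  set L := (agl.map (fun a => (f a).1)).flatten with hL
  have hLmem : ∀ φ ∈ L, φ ∈ Δ := by
    intro φ hφ
    rw [hL, List.mem_flatten] at hφ
    obtain ⟨l, hl, hφl⟩ := hφ
    obtain ⟨a, _, rfl⟩ := List.mem_map.mp hl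
    exact hf1 a φ hφl
  have hLwf : ∀ φ ∈ L, Wf φ := fun φ hφ => hwf φ (hLmem φ hφ)
  have wL : Wf (Formula.bigAnd L) := wf_bigAnd hLwf
  obtain ⟨Pm, hPm, hndm, hsub⟩ := mergeAll hfun (agl.map fun a => (f a).2) (by
    intro P hP
    obtain ⟨a, _, rfl⟩ := List.mem_map.mp hP
    exact ⟨hf2 a, hf3 a⟩)
  have RA : ∀ a : Ag, LEL (Formula.neg (diaPre Pm
      (Formula.dia z a (Formula.bigAnd L)))) := by
    intro a
    have himp : LEL (Formula.impl (Formula.dia z a (Formula.bigAnd L))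
        (Formula.dia z a (Formula.bigAnd (f a).1))) := by
      refine dia_mono (bigAnd_imp hLwf (fun φ hφ => hwf φ (hf1 a φ hφ)) ?_)
      intro φ hφ
      refine Or.inl ?_
      rw [hL, List.mem_flatten]
      exact ⟨(f a).1, List.mem_map_of_mem (by simp [hagl]), hφ⟩
    obtain ⟨E, hE⟩ := exists_perm_append hfun (hf2 a) hPm (hf3 a)
      (hsub (f a).2 (List.mem_map_of_mem (by simp [hagl])))
    exact refute_lift (hf4 a) himp hE hndm
  have hui := LEL.ui (x := z) (φ := Formula.neg (Formula.bigAnd L)) agl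
    (wf_neg wL) (Finset.nodup_toList _) (fun a => by simp [hagl])
  have hstep : LEL (Formula.impl (Formula.bigAnd L)
      (Formula.neg (Formula.bigAnd (agl.map fun a =>
        Formula.assign z a (Formula.neg (Formula.bigAnd L)))))) :=
    imp_trans (nneg_intro wL) (contrapose hui)
  have horelim : LEL (Formula.neg (diaPre Pm (Formula.neg (Formula.bigAnd
      (agl.map fun a => Formula.assign z a (Formula.neg (Formula.bigAnd L))))))) := by
    refine orelim ?_ ?_
    · intro ψ hψ
      obtain ⟨a, _, rfl⟩ := List.mem_map.mp hψ
      exact wf_assign (wf_neg wL)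
    · intro ψ hψ
      obtain ⟨a, _, rfl⟩ := List.mem_map.mp hψ
      exact RA a
  exact h L hLmem Pm hPm hndm (mp_neg (pre_mono (P := Pm) hstep) horelim)

lemma consAll_insert_forced [DecidableEq Ag]
    {Δ : Set (Formula Ag Xv Pr)} {τ : Set (Xv × Ag)} {w z : Xv} {b : Ag}
    (hwf : ∀ φ ∈ Δ, Wf φ) (hfun : FunRel τ) (h : ConsAll Δ τ)
    (hdia : Formula.dia w b Formula.top ∈ Δ)
    (hzfv : ∀ φ ∈ Δ, z ∉ Formula.FV φ)
    (hz : ∀ c, (z, c) ∉ τ) :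
    ConsAll Δ (insert (z, b) τ) := by
  intro l hl P hP hnd hr
  have hlwf : ∀ φ ∈ l, Wf φ := fun φ hφ => hwf φ (hl φ hφ)
  by_cases hmem : (z, b) ∈ P
  · obtain ⟨A, hA1, hA2, hA3⟩ := reorg hz hP hnd hmem (wf_bigAnd hlwf) hr
    -- derive the "alive" implication
    have wl : Wf (Formula.bigAnd l) := wf_bigAnd hlwf
    have wd : Wf (Formula.dia w b (Formula.top : Formula Ag Xv Pr)) :=
      wf_dia (wf_top (Ag := Ag) (Xv := Xv) (Pr := Pr))
    have c1 : LEL (Formula.impl (Formula.bigAnd (Formula.dia w b Formula.top :: l))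
        (Formula.dia w b Formula.top)) :=
      and_left wd wl
    -- key1 : [z]⊥ → [w]⊥
    have s1 : LEL (Formula.impl (Formula.assign z b (Formula.fbot : Formula Ag Xv Pr))
        (Formula.assign w b (Formula.assign z b Formula.fbot))) := by
      refine LEL.tr (wf_assign wf_fbot) ?_
      simp [Formula.FV, Formula.fbot]
    have s2 : LEL (Formula.assign w b (Formula.impl
        (Formula.assign z b (Formula.fbot : Formula Ag Xv Pr)) Formula.fbot)) := by
      have := LEL.sub (x := z) (y := w) (a := b)
        (φ := (Formula.fbot : Formula Ag Xv Pr)) wf_fbot trivial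
      simpa [Formula.subst, Formula.fbot] using this
    have s3 : LEL (Formula.impl (Formula.assign w b (Formula.assign z b
        (Formula.fbot : Formula Ag Xv Pr))) (Formula.assign w b Formula.fbot)) :=
      LEL.mp (LEL.kasgn (wf_assign wf_fbot) wf_fbot) s2
    have key1 : LEL (Formula.impl (Formula.assign z b (Formula.fbot : Formula Ag Xv Pr))
        (Formula.assign w b Formula.fbot)) := imp_trans s1 s3
    have c2 : LEL (Formula.impl (Formula.dia w b (Formula.top : Formula Ag Xv Pr))
        (Formula.dia z b Formula.top)) := contrapose key1
    have c3 : LEL (Formula.impl (Formula.bigAnd (Formula.dia w b Formula.top :: l))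
        (Formula.bigAnd l)) := and_right wd wl
    have c4 : LEL (Formula.impl (Formula.bigAnd l)
        (Formula.assign z b (Formula.bigAnd l))) := by
      refine LEL.tr wl ?_
      intro hzin
      obtain ⟨φ, hφ, hzφ⟩ := mem_fv_bigAnd.mp hzin
      exact hzfv φ (hl φ hφ) hzφ
    have c5 : LEL (Formula.impl (Formula.and (Formula.dia z b Formula.top)
        (Formula.assign z b (Formula.bigAnd l))) (Formula.dia z b (Formula.bigAnd l))) :=
      dia_top_box wl
    have alive : LEL (Formula.impl (Formula.bigAnd (Formula.dia w b Formula.top :: l))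
        (Formula.dia z b (Formula.bigAnd l))) :=
      imp_trans (imp_and (imp_trans c1 c2) (imp_trans c3 c4)) c5
    have : LEL (Formula.neg (diaPre A (Formula.bigAnd
        (Formula.dia w b Formula.top :: l)))) :=
      mp_neg (pre_mono (P := A) alive) hA3
    refine h (Formula.dia w b Formula.top :: l) ?_ A hA1 hA2 this
    intro φ hφ
    rcases List.mem_cons.mp hφ with rfl | hh
    · exact hdia
    · exact hl φ hh
  · refine h l hl P ?_ hnd hr
    intro p hp
    rcases hP p hp with h1 | h1
    · exact absurd (h1 ▸ hp) hmem
    · exact h1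

end Toolkit

section Assembly
set_option linter.unusedSectionVars false
open Formula

variable {Ag Xv Pr : Type} [DecidableEq Xv]

lemma mem_FVset {Δ : Set (Formula Ag Xv Pr)} {z : Xv} :
    z ∈ FVset Δ ↔ ∃ φ ∈ Δ, z ∈ Formula.FV φ := by simp [FVset]

lemma FVset_insert {Δ : Set (Formula Ag Xv Pr)} {φ : Formula Ag Xv Pr} :
    FVset (insert φ Δ) = ↑(Formula.FV φ) ∪ FVset Δ := by
  ext z
  simp [FVset]

lemma funRel_insert {τ : Set (Xv × Ag)} (hfun : FunRel τ) {z : Xv} {a : Ag}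
    (hz : ∀ c, (z, c) ∉ τ) : FunRel (insert (z, a) τ) := by
  rintro ⟨p1, p2⟩ hp ⟨q1, q2⟩ hq heq
  simp only at heq
  subst heq
  rcases hp with hp | hp <;> rcases hq with hq | hq
  · rw [Prod.mk.injEq] at hp hq
    rw [hp.2, hq.2]
  · obtain ⟨rfl, rfl⟩ := Prod.mk.injEq .. |>.mp hp
    exact absurd hq (hz q2)
  · obtain ⟨rfl, rfl⟩ := Prod.mk.injEq .. |>.mp hq
    exact absurd hp (hz p2)
  · exact hfun _ hp _ hq rfl

lemma chain_mem_finite {α : Type*} {c : Set (Set α)} (hc : IsChain (· ⊆ ·) c)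
    (hne : c.Nonempty) (xs : List α) (h : ∀ x ∈ xs, x ∈ ⋃₀ c) :
    ∃ t ∈ c, ∀ x ∈ xs, x ∈ t := by
  induction xs with
  | nil => exact ⟨hne.choose, hne.choose_spec, by simp⟩
  | cons x xs ih =>
      obtain ⟨t, htc, hts⟩ := ih (fun y hy => h y (by simp [hy]))
      obtain ⟨s, hsc, hxs⟩ := h x (by simp)
      rcases hc.total htc hsc with hsub | hsub
      · refine ⟨s, hsc, fun y hy => ?_⟩
        rcases List.mem_cons.mp hy with rfl | hy
        · exact hxs
        · exact hsub (hts y hy)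
      · refine ⟨t, htc, fun y hy => ?_⟩
        rcases List.mem_cons.mp hy with rfl | hy
        · exact hsub hxs
        · exact hts y hy

variable [DecidableEq Ag]

/-- The carrier for the Zorn argument: a set of formulas together with a
partial assignment, encoded as a single set. -/
abbrev StT (Ag Xv Pr : Type) := Set ((Formula Ag (Xv ⊕ Ag) Pr) ⊕ ((Xv ⊕ Ag) × Ag))

def stD (S : StT Ag Xv Pr) : Set (Formula Ag (Xv ⊕ Ag) Pr) := {φ | Sum.inl φ ∈ S}

def stT (S : StT Ag Xv Pr) : Set ((Xv ⊕ Ag) × Ag) := {p | Sum.inr p ∈ S}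

def stInv (Γ : Set (Formula Ag (Xv ⊕ Ag) Pr)) (S : StT Ag Xv Pr) : Prop :=
  Γ ⊆ stD S ∧ (∀ φ ∈ stD S, Wf φ) ∧ FunRel (stT S) ∧
  (∀ a b : Ag, ((Sum.inr a : Xv ⊕ Ag), b) ∈ stT S → b = a) ∧
  (∀ a : Ag, (Sum.inr a : Xv ⊕ Ag) ∈ FVset (stD S) →
      ∃ c : Ag, ((Sum.inr a : Xv ⊕ Ag), c) ∈ stT S) ∧
  ConsAll (stD S) (stT S)

@[simp] lemma stD_insert_inl {S : StT Ag Xv Pr} {φ : Formula Ag (Xv ⊕ Ag) Pr} :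
    stD (insert (Sum.inl φ) S) = insert φ (stD S) := by
  ext ψ; simp [stD]

@[simp] lemma stT_insert_inl {S : StT Ag Xv Pr} {φ : Formula Ag (Xv ⊕ Ag) Pr} :
    stT (insert (Sum.inl φ) S) = stT S := by
  ext p; simp [stT]

@[simp] lemma stD_insert_inr {S : StT Ag Xv Pr} {p : (Xv ⊕ Ag) × Ag} :
    stD (insert (Sum.inr p) S) = stD S := by
  ext ψ; simp [stD]

@[simp] lemma stT_insert_inr {S : StT Ag Xv Pr} {p : (Xv ⊕ Ag) × Ag} :
    stT (insert (Sum.inr p) S) = insert p (stT S) := by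
  ext q; simp [stT]

end Assembly

/-- Lindenbaum-type extension lemma. Every consistent set of
`L_𝐀`-formulas in which no agent name occurs free extends to an FV-maximal
consistent set that is coherent with some assignment. -/
theorem lindenbaum_coherent
    {Ag Xv Pr : Type} [Fintype Ag] [Nonempty Ag] [DecidableEq Ag]
    [DecidableEq Xv] [Countable Xv] [Infinite Xv] [Countable Pr]
    (Γ : Set (Formula Ag (Xv ⊕ Ag) Pr)) (hwf : ∀ φ ∈ Γ, Formula.Wf φ)
    (hcon : Consistent Γ)
    (hfree : ∀ φ ∈ Γ, ∀ a : Ag, (Sum.inr a : Xv ⊕ Ag) ∉ Formula.FV φ) :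
    ∃ (Δ : Set (Formula Ag (Xv ⊕ Ag) Pr)) (σ : (Xv ⊕ Ag) → Ag),
      Γ ⊆ Δ ∧ FVMCS Δ ∧ Coherent Δ σ := by
  classical
  -- the initial state
  have hS0 : stInv Γ (Sum.inl '' Γ) := by
    have hDD : stD (Sum.inl '' Γ : StT Ag Xv Pr) = Γ := by
      ext φ; simp [stD]
    have hTT : stT (Sum.inl '' Γ : StT Ag Xv Pr) = ∅ := by
      ext p; simp [stT]
    refine ⟨by rw [hDD], by rw [hDD]; exact hwf, by rw [hTT]; rintro p hp; exact absurd hp (Set.notMem_empty p),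
      ?_, ?_, ?_⟩
    · rw [hTT]; intro a b hb; exact absurd hb (Set.notMem_empty _)
    · rw [hDD, hTT]
      intro a ha
      obtain ⟨φ, hφ, hmem⟩ := mem_FVset.mp ha
      exact absurd hmem (hfree φ hφ a)
    · rw [hDD, hTT]
      intro l hl P hP hnd hr
      cases P with
      | nil => exact hcon ⟨l, hl, hr⟩
      | cons p P => exact absurd (hP p (by simp)) (Set.notMem_empty p)
  -- Zorn
  have chainUB : ∀ c ⊆ {S : StT Ag Xv Pr | stInv Γ S}, IsChain (· ⊆ ·) c →
      c.Nonempty → ∃ ub ∈ {S : StT Ag Xv Pr | stInv Γ S}, ∀ s ∈ c, s ⊆ ub := by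
    intro c hcS hchain hcne
    refine ⟨⋃₀ c, ?_, fun s hs => Set.subset_sUnion_of_mem hs⟩
    obtain ⟨S0, hS0c⟩ := hcne
    have hDm : ∀ {φ}, φ ∈ stD (⋃₀ c) ↔ ∃ t ∈ c, φ ∈ stD t := by
      intro φ; constructor
      · rintro ⟨t, htc, hφ⟩; exact ⟨t, htc, hφ⟩
      · rintro ⟨t, htc, hφ⟩; exact ⟨t, htc, hφ⟩
    have hTm : ∀ {p}, p ∈ stT (⋃₀ c) ↔ ∃ t ∈ c, p ∈ stT t := by
      intro p; constructor
      · rintro ⟨t, htc, hp⟩; exact ⟨t, htc, hp⟩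
      · rintro ⟨t, htc, hp⟩; exact ⟨t, htc, hp⟩
    refine ⟨?_, ?_, ?_, ?_, ?_, ?_⟩
    · intro φ hφ
      exact hDm.mpr ⟨S0, hS0c, (hcS hS0c).1 hφ⟩
    · intro φ hφ
      obtain ⟨t, htc, hφ⟩ := hDm.mp hφ
      exact (hcS htc).2.1 φ hφ
    · intro p hp q hq heq
      obtain ⟨t, htc, hp⟩ := hTm.mp hp
      obtain ⟨s, hsc, hq⟩ := hTm.mp hq
      rcases hchain.total htc hsc with hsub | hsub
      · exact (hcS hsc).2.2.1 p (hsub hp) q hq heq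
      · exact (hcS htc).2.2.1 p hp q (hsub hq) heq
    · intro a b hab
      obtain ⟨t, htc, hab⟩ := hTm.mp hab
      exact (hcS htc).2.2.2.1 a b hab
    · intro a ha
      obtain ⟨φ, hφ, hmem⟩ := mem_FVset.mp ha
      obtain ⟨t, htc, hφ⟩ := hDm.mp hφ
      obtain ⟨cc, hcc⟩ := (hcS htc).2.2.2.2.1 a (mem_FVset.mpr ⟨φ, hφ, hmem⟩)
      exact ⟨cc, hTm.mpr ⟨t, htc, hcc⟩⟩
    · intro l hl P hP hnd hr
      have hxwit : ∀ x ∈ (l.map Sum.inl ++ P.map Sum.inr), x ∈ ⋃₀ c := by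
        intro x hx
        rcases List.mem_append.mp hx with hx | hx
        · obtain ⟨φ, hφ, rfl⟩ := List.mem_map.mp hx
          exact hl φ hφ
        · obtain ⟨p, hp, rfl⟩ := List.mem_map.mp hx
          exact hP p hp
      obtain ⟨t, htc, ht⟩ := chain_mem_finite hchain ⟨S0, hS0c⟩
        (l.map Sum.inl ++ P.map Sum.inr) hxwit
      refine (hcS htc).2.2.2.2.2 l ?_ P ?_ hnd hr
      · intro φ hφ
        exact ht (Sum.inl φ) (List.mem_append.mpr (Or.inl (List.mem_map_of_mem hφ)))
      · intro p hp
        exact ht (Sum.inr p) (List.mem_append.mpr (Or.inr (List.mem_map_of_mem hp)))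
  obtain ⟨m, hm0, hmax⟩ := zorn_subset_nonempty {S : StT Ag Xv Pr | stInv Γ S} chainUB
    (Sum.inl '' Γ) hS0
  -- unpack the maximal element
  obtain ⟨hΓm, hwfm, hfunm, hinrval, hcover, hcons⟩ := hmax.1
  have hmax' : ∀ S : StT Ag Xv Pr, stInv Γ S → m ⊆ S → S ⊆ m :=
    fun S h1 h2 => hmax.2 h1 h2
  -- every inl-variable is assigned
  have hinl : ∀ x : Xv, ∃ cc : Ag, ((Sum.inl x : Xv ⊕ Ag), cc) ∈ stT m := by
    intro x
    by_contra hno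
    push_neg at hno
    obtain ⟨a, ha⟩ := choose_val hwfm hfunm hcons hno
    have hS' : stInv Γ (insert (Sum.inr ((Sum.inl x : Xv ⊕ Ag), a)) m) := by
      refine ⟨?_, ?_, ?_, ?_, ?_, ?_⟩ <;> simp only [stD_insert_inr, stT_insert_inr]
      · exact hΓm
      · exact hwfm
      · exact funRel_insert hfunm hno
      · rintro a' b hab
        rcases hab with hab | hab
        · exact absurd (Prod.mk.injEq .. |>.mp hab).1 (by simp)
        · exact hinrval a' b hab
      · intro a' ha'
        obtain ⟨cc, hcc⟩ := hcover a' ha'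
        exact ⟨cc, Set.mem_insert_of_mem _ hcc⟩
      · exact ha
    have hsub := hmax' _ hS' (Set.subset_insert _ _)
    exact hno a (hsub (Set.mem_insert _ _))
  -- FV-maximality
  have hdecide : ∀ φ : Formula Ag (Xv ⊕ Ag) Pr, Formula.Wf φ →
      (Formula.FV φ : Set (Xv ⊕ Ag)) ⊆ FVset (stD m) →
      φ ∈ stD m ∨ Formula.neg φ ∈ stD m := by
    intro φ wφ hsubfv
    by_contra hno
    push_neg at hno
    have hcovins : ∀ ψ : Formula Ag (Xv ⊕ Ag) Pr, Formula.FV ψ = Formula.FV φ →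
        ∀ a : Ag, (Sum.inr a : Xv ⊕ Ag) ∈ FVset (insert ψ (stD m)) →
        ∃ cc : Ag, ((Sum.inr a : Xv ⊕ Ag), cc) ∈ stT m := by
      intro ψ hψfv a ha
      rw [FVset_insert, hψfv] at ha
      rcases ha with ha | ha
      · exact hcover a (hsubfv ha)
      · exact hcover a ha
    rcases consAll_dichot hwfm wφ hfunm hcons with hOK | hOK
    · have hS' : stInv Γ (insert (Sum.inl φ) m) := by
        refine ⟨?_, ?_, ?_, ?_, ?_, ?_⟩ <;> simp only [stD_insert_inl, stT_insert_inl]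
        · exact fun ψ hψ => Set.mem_insert_of_mem _ (hΓm hψ)
        · intro ψ hψ
          rcases hψ with rfl | hψ
          · exact wφ
          · exact hwfm ψ hψ
        · exact hfunm
        · exact hinrval
        · exact hcovins φ rfl
        · exact hOK
      have hsub := hmax' _ hS' (Set.subset_insert _ _)
      exact hno.1 (hsub (Set.mem_insert _ _))
    · have hS' : stInv Γ (insert (Sum.inl (Formula.neg φ)) m) := by
        refine ⟨?_, ?_, ?_, ?_, ?_, ?_⟩ <;> simp only [stD_insert_inl, stT_insert_inl]
        · exact fun ψ hψ => Set.mem_insert_of_mem _ (hΓm hψ)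
        · intro ψ hψ
          rcases hψ with rfl | hψ
          · exact (wφ : Formula.Wf (Formula.neg φ))
          · exact hwfm ψ hψ
        · exact hfunm
        · exact hinrval
        · exact hcovins (Formula.neg φ) rfl
        · exact hOK
      have hsub := hmax' _ hS' (Set.subset_insert _ _)
      exact hno.2 (hsub (Set.mem_insert _ _))
  -- condition (iii) of coherence
  have hiii : ∀ (w : Xv ⊕ Ag) (b : Ag), Formula.dia w b Formula.top ∈ stD m →
      (Sum.inr b : Xv ⊕ Ag) ∈ FVset (stD m) := by
    intro w b hdia
    by_contra hnot
    have hK : LEL (Formula.know ({Sum.inr b} : Finset (Xv ⊕ Ag))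
        (Formula.top : Formula Ag (Xv ⊕ Ag) Pr)) := by
      have h0 : LEL (Formula.know (∅ : Finset (Xv ⊕ Ag))
          (Formula.top : Formula Ag (Xv ⊕ Ag) Pr)) := LEL.necK ⟨trivial, rfl⟩ thm_top
      exact LEL.mp (LEL.mono (Finset.empty_subset _) ⟨trivial, rfl⟩) h0
    have hKfv : Formula.FV (Formula.know ({Sum.inr b} : Finset (Xv ⊕ Ag))
        (Formula.top : Formula Ag (Xv ⊕ Ag) Pr)) = {Sum.inr b} := rfl
    by_cases hb : ∃ cc : Ag, ((Sum.inr b : Xv ⊕ Ag), cc) ∈ stT m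
    · have hOK := consAll_insert_thm hK hwfm hcons
      have hS' : stInv Γ (insert (Sum.inl (Formula.know ({Sum.inr b} : Finset (Xv ⊕ Ag))
          Formula.top)) m) := by
        refine ⟨?_, ?_, ?_, ?_, ?_, ?_⟩ <;> simp only [stD_insert_inl, stT_insert_inl]
        · exact fun ψ hψ => Set.mem_insert_of_mem _ (hΓm hψ)
        · intro ψ hψ
          rcases hψ with rfl | hψ
          · exact ⟨trivial, rfl⟩
          · exact hwfm ψ hψ
        · exact hfunm
        · exact hinrval
        · intro a ha
          rw [FVset_insert, hKfv] at ha
          rcases ha with ha | ha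
          · simp only [Finset.coe_singleton, Set.mem_singleton_iff, Sum.inr.injEq] at ha
            exact ha ▸ hb
          · exact hcover a ha
        · exact hOK
      have hsub := hmax' _ hS' (Set.subset_insert _ _)
      have hKm : Formula.know ({Sum.inr b} : Finset (Xv ⊕ Ag)) Formula.top ∈ stD m :=
        hsub (Set.mem_insert _ _)
      exact hnot (mem_FVset.mpr ⟨_, hKm, by rw [hKfv]; simp⟩)
    · push_neg at hb
      have hzfv : ∀ φ ∈ stD m, (Sum.inr b : Xv ⊕ Ag) ∉ Formula.FV φ :=
        fun φ hφ hmem => hnot (mem_FVset.mpr ⟨φ, hφ, hmem⟩)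
      have hOK1 := consAll_insert_forced hwfm hfunm hcons hdia hzfv hb
      have hOK := consAll_insert_thm hK hwfm hOK1
      have hS' : stInv Γ (insert (Sum.inl (Formula.know ({Sum.inr b} : Finset (Xv ⊕ Ag))
          Formula.top)) (insert (Sum.inr ((Sum.inr b : Xv ⊕ Ag), b)) m)) := by
        refine ⟨?_, ?_, ?_, ?_, ?_, ?_⟩ <;>
          simp only [stD_insert_inl, stT_insert_inl, stD_insert_inr, stT_insert_inr]
        · exact fun ψ hψ => Set.mem_insert_of_mem _ (hΓm hψ)
        · intro ψ hψ
          rcases hψ with rfl | hψ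
          · exact ⟨trivial, rfl⟩
          · exact hwfm ψ hψ
        · exact funRel_insert hfunm hb
        · rintro a' b' hab
          rcases hab with hab | hab
          · obtain ⟨h1, h2⟩ := Prod.mk.injEq .. |>.mp hab
            rw [h2]
            exact (Sum.inr.injEq .. |>.mp h1).symm
          · exact hinrval a' b' hab
        · intro a ha
          rw [FVset_insert, hKfv] at ha
          rcases ha with ha | ha
          · simp only [Finset.coe_singleton, Set.mem_singleton_iff, Sum.inr.injEq] at ha
            exact ⟨b, ha ▸ Set.mem_insert _ _⟩
          · obtain ⟨cc, hcc⟩ := hcover a ha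
            exact ⟨cc, Set.mem_insert_of_mem _ hcc⟩
        · exact hOK
      have hsub := hmax' _ hS'
        ((Set.subset_insert _ _).trans (Set.subset_insert _ _))
      have hKm : Formula.know ({Sum.inr b} : Finset (Xv ⊕ Ag)) Formula.top ∈ stD m :=
        hsub (Set.mem_insert _ _)
      exact hnot (mem_FVset.mpr ⟨_, hKm, by rw [hKfv]; simp⟩)
  -- the assignment
  let σ : (Xv ⊕ Ag) → Ag := fun z =>
    if h : ∃ cc : Ag, (z, cc) ∈ stT m then h.choose
    else Sum.elim (fun _ => Classical.arbitrary Ag) id z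
  have hσmem : ∀ z : Xv ⊕ Ag, (∃ cc : Ag, (z, cc) ∈ stT m) → (z, σ z) ∈ stT m := by
    intro z hz
    simp only [σ, dif_pos hz]
    exact hz.choose_spec
  refine ⟨stD m, σ, hΓm, ⟨hwfm, ?_, hdecide⟩, ?_, ?_, hiii⟩
  · -- consistency
    rintro ⟨l, hl, hr⟩
    exact hcons l hl [] (by simp) (by simp) hr
  · -- coherence (i)
    intro a ha
    have hz : ∃ cc : Ag, ((Sum.inr a : Xv ⊕ Ag), cc) ∈ stT m := hcover a ha
    simp only [σ, dif_pos hz]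
    exact hinrval a hz.choose hz.choose_spec
  · -- coherence (ii)
    intro z hz l hl
    have hex : ∃ cc : Ag, (z, cc) ∈ stT m := by
      cases z with
      | inl x => exact hinl x
      | inr a => exact hcover a hz
    have hmem := hσmem z hex
    have := hcons l hl [(z, σ z)] (by simpa using hmem) (by simp)
    simpa using this

end SimplicialEpistemic
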